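/- Let V(G) = (1/2)ν̃²G² - G³ + (1/4)G⁴ and E(G) = (1/2)(G')² + V(G). If G(t) = P/(Q - cos(ν̃t)) with P = ν̃²Q, Q² = 2/(2 - ν̃²) (the SFB displaced amplitude at the extreme position with β = γ = r₀ = 1 and φ = 0), then E(G(t)) = 0 for all t where G is defined. -/

import Mathlib

theorem stmt_19 (ν' : ℝ) (hν : 0 < ν') (hν2 : ν' < Real.sqrt 2)
    (P Q : ℝ) (hQ : Q ^ 2 = 2 / (2 - ν' ^ 2)) (hP : P = ν' ^ 2 * Q)
    (G V : ℝ → ℝ)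
    (hG : ∀ t, G t = P / (Q - Real.cos (ν' * t)))
    (hV : ∀ x, V x = (1 / 2) * ν' ^ 2 * x ^ 2 - x ^ 3 + (1 / 4) * x ^ 4) :
    ∀ t, (1 / 2) * (deriv G t) ^ 2 + V (G t) = 0 := by
  have hν2' : ν' ^ 2 < 2 := by
    have h2 : (0:ℝ) ≤ Real.sqrt 2 := Real.sqrt_nonneg 2
    nlinarith [Real.sq_sqrt (by norm_num : (2:ℝ) ≥ 0), hν2, hν]
  have hne : (2 - ν' ^ 2) ≠ 0 := by nlinarith
  have hQ' : Q ^ 2 * (2 - ν' ^ 2) = 2 := by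
    field_simp at hQ; linarith [hQ]
  have hQ1 : 1 < Q ^ 2 := by nlinarith
  intro t
  have hd : Q - Real.cos (ν' * t) ≠ 0 := by
    intro h
    have : Q = Real.cos (ν' * t) := by linarith
    have hc := Real.neg_one_le_cos (ν' * t)
    have hc' := Real.cos_le_one (ν' * t)
    nlinarith
  have hGeq : G = fun t => P / (Q - Real.cos (ν' * t)) := funext hG
  have hder : HasDerivAt G (-(P * (ν' * Real.sin (ν' * t))) / (Q - Real.cos (ν' * t)) ^ 2) t := by
    rw [hGeq]
    have h1 : HasDerivAt (fun t : ℝ => Q - Real.cos (ν' * t)) (ν' * Real.sin (ν' * t)) t := by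
      have hc : HasDerivAt (fun t : ℝ => Real.cos (ν' * t)) (-Real.sin (ν' * t) * ν') t := by
        have := (Real.hasDerivAt_cos (ν' * t)).comp t ((hasDerivAt_id t).const_mul ν')
        simpa [Function.comp_def] using this
      simpa [mul_comm] using hc.const_sub Q
    have := (hasDerivAt_const t P).div h1 hd
    simpa [Pi.div_def] using this
  rw [hder.deriv, hG t, hV]
  have hsc : Real.sin (ν' * t) ^ 2 = 1 - Real.cos (ν' * t) ^ 2 := by
    nlinarith [Real.sin_sq_add_cos_sq (ν' * t)]
  set c := Real.cos (ν' * t)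
  subst hP
  field_simp
  linear_combination (4 * ν' ^ 6 * Q ^ 2) * hsc -
    (2 * ν' ^ 6 * Q ^ 2) * hQ'
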